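/- Two Markov equivalent DAGs have the same skeleton and the same v-structures. -/

import Mathlib

/-! ## Basic notions for directed graphs (DAGs) given by an edge relation `E`. -/

/-- A directed graph (edge relation `E`) is acyclic: no directed cycles. -/
def Acyclic {V : Type*} (E : V → V → Prop) : Prop := ∀ x, ¬ Relation.TransGen E x x

/-- Two nodes are adjacent if there is an edge between them in either direction. -/
def adjD {V : Type*} (E : V → V → Prop) (a b : V) : Prop := E a b ∨ E b a

/-- `p` is a path (in the skeleton) from `X` to `Y`: consecutive nodes are adjacent and
nodes are pairwise distinct. -/
def IsPath {V : Type*} (E : V → V → Prop) (p : List V) (X Y : V) : Prop :=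
  p.head? = some X ∧ p.getLast? = some Y ∧ p.Chain' (adjD E) ∧ p.Nodup

/-- A path is d-connecting (open) given `S` if every collider on it is an ancestor
of some node of `S` and no non-collider on it lies in `S`. -/
def dConnecting {V : Type*} (E : V → V → Prop) (S : Set V) (p : List V) : Prop :=
  ∀ (i : ℕ) a b c, p[i]? = some a → p[i+1]? = some b → p[i+2]? = some c →
    ((E a b ∧ E c b) → ∃ s ∈ S, Relation.ReflTransGen E b s) ∧
    (¬ (E a b ∧ E c b) → b ∉ S)

/-- `X` and `Y` are d-separated by `S` if every path between them is blocked by `S`. -/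
def dSeparated {V : Type*} (E : V → V → Prop) (S : Set V) (X Y : V) : Prop :=
  ∀ p : List V, IsPath E p X Y → ¬ dConnecting E S p

/-- A v-structure `a → b ← c` with `a`, `c` non-adjacent. -/
def vStructD {V : Type*} (E : V → V → Prop) (a b c : V) : Prop :=
  E a b ∧ E c b ∧ a ≠ c ∧ ¬ adjD E a c

/-! ## Partially directed graphs (PDAGs / MPDAGs). -/

/-- A partially directed graph: directed edges `dir` and undirected edges `undir`. -/
structure PDAG (V : Type*) where
  dir : V → V → Prop
  undir : V → V → Prop
  undir_symm : ∀ a b, undir a b → undir b a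
  dir_asymm : ∀ a b, dir a b → ¬ dir b a
  disj : ∀ a b, undir a b → ¬ dir a b

namespace PDAG

variable {V : Type*} (G : PDAG V)

/-- Adjacency in a partially directed graph. -/
def adj (a b : V) : Prop := G.dir a b ∨ G.dir b a ∨ G.undir a b

/-- A v-structure `a → b ← c` in a PDAG, with `a, c` non-adjacent. -/
def vStruct (a b c : V) : Prop := G.dir a b ∧ G.dir c b ∧ a ≠ c ∧ ¬ G.adj a c

/-- Parents of `X`. -/
def pa (X : V) : Set V := {z | G.dir z X}

/-- Children of `X`. -/
def ch (X : V) : Set V := {z | G.dir X z}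

/-- Siblings (undirected neighbours) of `X`. -/
def sib (X : V) : Set V := {z | G.undir X z}

/-- A DAG `E` is represented by the (M)PDAG `G` (i.e. `E ∈ [G]`): it is acyclic,
has the same skeleton and the same v-structures as `G`, and preserves every
directed edge of `G`. -/
def Represents (E : V → V → Prop) : Prop :=
  Acyclic E ∧ (∀ a b, adjD E a b ↔ G.adj a b) ∧
  (∀ a b, G.dir a b → E a b) ∧
  (∀ a b c, vStructD E a b c ↔ G.vStruct a b c)

/-- `G` is an MPDAG: its represented class is non-empty, an edge is directed in
`G` iff it has that orientation in all DAGs of the class, and every undirected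
edge takes both orientations across the class. -/
def IsMPDAG : Prop :=
  (∃ E, G.Represents E) ∧
  (∀ a b, G.dir a b ↔ (G.adj a b ∧ ∀ E, G.Represents E → E a b)) ∧
  (∀ a b, G.undir a b → ∃ E, G.Represents E ∧ E a b)

/-- Induced sub-PDAG on a vertex set `W`. -/
def induce (W : Set V) : PDAG V where
  dir a b := a ∈ W ∧ b ∈ W ∧ G.dir a b
  undir a b := a ∈ W ∧ b ∈ W ∧ G.undir a b
  undir_symm a b h := ⟨h.2.1, h.1, G.undir_symm a b h.2.2⟩
  dir_asymm a b h hb := G.dir_asymm a b h.2.2 hb.2.2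
  disj a b h hd := G.disj a b h.2.2 hd.2.2

end PDAG

/-- A path in a PDAG: consecutive nodes adjacent, pairwise distinct nodes. -/
def IsPDAGPath {V : Type*} (G : PDAG V) (p : List V) (X Y : V) : Prop :=
  p.head? = some X ∧ p.getLast? = some Y ∧ p.Chain' G.adj ∧ p.Nodup

/-- A path is b-possibly causal: no edge `V_j → V_i` in `G` for `i < j` along it. -/
def bPossiblyCausal {V : Type*} (G : PDAG V) (p : List V) : Prop :=
  ∀ (i j : ℕ) a b, i < j → p[i]? = some a → p[j]? = some b → ¬ G.dir b a

/-- A path is chordless: non-consecutive nodes are non-adjacent. -/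
def Chordless {V : Type*} (G : PDAG V) (p : List V) : Prop :=
  ∀ (i j : ℕ) a b, i + 1 < j → p[i]? = some a → p[j]? = some b → ¬ G.adj a b

/-- Critical set of `X` with respect to `Y` in `G`: the adjacent vertices of `X`
lying on some chordless b-possibly causal path from `X` to `Y`. -/
def criticalSet {V : Type*} (G : PDAG V) (X Y : V) : Set V :=
  {c | ∃ p : List V, IsPDAGPath G p X Y ∧ bPossiblyCausal G p ∧ Chordless G p ∧ p[1]? = some c}

/-- A DAG extension of `G`: acyclic, same skeleton, all directed edges of `G`
kept, and no v-structures beyond those of `G`. -/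
def ExtendsNoNewV {V : Type*} (G : PDAG V) (E : V → V → Prop) : Prop :=
  Acyclic E ∧ (∀ a b, adjD E a b ↔ G.adj a b) ∧
  (∀ a b, G.dir a b → E a b) ∧
  (∀ a b c, vStructD E a b c → G.vStruct a b c)

/-- An acyclic orientation of `G` extending its directed edges. -/
def ExtendsDir {V : Type*} (G : PDAG V) (E : V → V → Prop) : Prop :=
  Acyclic E ∧ (∀ a b, adjD E a b ↔ G.adj a b) ∧ (∀ a b, G.dir a b → E a b)

/-- `W` is (the vertex set of) a B-component of `G`: an equivalence class of the
undirected-connectivity relation. -/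
def IsBComponent {V : Type*} (G : PDAG V) (W : Set V) : Prop :=
  ∃ a, W = {b | Relation.ReflTransGen G.undir a b}

/-- Every non-endpoint node of `p` is of definite status in `M`: a definite
collider or a definite non-collider. -/
def DefiniteStatus {V : Type*} (M : PDAG V) (p : List V) : Prop :=
  ∀ (i : ℕ) a b c, p[i]? = some a → p[i+1]? = some b → p[i+2]? = some c →
    (M.dir a b ∧ M.dir c b) ∨ M.dir b a ∨ M.dir b c ∨
    (M.undir a b ∧ M.undir b c ∧ ¬ M.adj a c)

private lemma chain'_getElem {V : Type*} {R : V → V → Prop} {p : List V}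
    (hc : p.Chain' R) {i : ℕ} {x y : V} (hx : p[i]? = some x) (hy : p[i+1]? = some y) :
    R x y := by
  obtain ⟨hi, rfl⟩ := List.getElem?_eq_some_iff.1 hx
  obtain ⟨hj, rfl⟩ := List.getElem?_eq_some_iff.1 hy
  have := List.isChain_iff_getElem.1 hc i (by omega)
  simpa using this

/-- Non-adjacent vertices with `a` not an ancestor of `b` are d-separated by the
parents of `a`. -/
private lemma sep_lemma {V : Type*} {E : V → V → Prop} (h : Acyclic E) {a b : V}
    (hne : a ≠ b) (hadj : ¬ adjD E a b) (hanc : ¬ Relation.TransGen E a b) :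
    dSeparated E {z | E z a} a b := by
  intro p hp hconn
  obtain ⟨hh, hl, hc, -⟩ := hp
  rw [List.head?_eq_getElem?] at hh
  rw [List.getLast?_eq_getElem?] at hl
  have key : ∀ i x y, p[i]? = some x → p[i+1]? = some y →
      E x y ∧ Relation.TransGen E a y := by
    intro i
    induction i with
    | zero =>
      intro x y hx hy
      have hxa : x = a := by rw [hx] at hh; exact Option.some.inj hh
      subst hxa
      have hadj1 : adjD E x y := chain'_getElem hc hx hy
      by_cases hay : E x y
      · exact ⟨hay, .single hay⟩
      · have hya : E y x := hadj1.resolve_left hay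
        cases hz : p[2]? with
        | some z =>
          have := (hconn 0 x y z hx hy hz).2 (fun hcol => hay hcol.1)
          exact absurd hya this
        | none =>
          have hlt : 1 < p.length := (List.getElem?_eq_some_iff.1 hy).1
          have h2 : p.length ≤ 2 := by
            by_contra hgt
            rw [List.getElem?_eq_getElem (by omega)] at hz; cases hz
          have hlen2 : p.length = 2 := by omega
          have hyb : y = b := by
            rw [hlen2] at hl
            rw [hy] at hl; exact Option.some.inj hl
          exact absurd (Or.inr (hyb ▸ hya)) hadj
    | succ i ih =>
      intro x y hx hy
      have hi : i < p.length := by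
        have := (List.getElem?_eq_some_iff.1 hx).1; omega
      obtain ⟨hwx, hax⟩ := ih p[i] x (List.getElem?_eq_getElem hi) hx
      have hadj1 : adjD E x y := chain'_getElem hc hx hy
      by_cases hxy : E x y
      · exact ⟨hxy, hax.tail hxy⟩
      · have hyx : E y x := hadj1.resolve_left hxy
        obtain ⟨s, hs, hrt⟩ :=
          (hconn i p[i] x y (List.getElem?_eq_getElem hi) hx hy).1 ⟨hwx, hyx⟩
        exact (h a (hax.trans (Relation.TransGen.trans_right hrt (.single hs)))).elim
  have hlen : 0 < p.length := (List.getElem?_eq_some_iff.1 hh).1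
  have hlen2 : 2 ≤ p.length := by
    by_contra hlt
    have h1 : p.length = 1 := by omega
    rw [h1] at hl
    rw [hh] at hl
    exact hne (Option.some.inj hl)
  obtain ⟨-, htg⟩ := key (p.length - 2) (p[p.length-2]'(by omega)) b
      (List.getElem?_eq_getElem (by omega))
      (by rw [show p.length - 2 + 1 = p.length - 1 by omega]; exact hl)
  exact hanc htg

private lemma isPath_pair {V : Type*} {E : V → V → Prop} {a b : V} (hne : a ≠ b)
    (h : adjD E a b) : IsPath E [a, b] a b := by
  refine ⟨rfl, rfl, ?_, by simp [hne]⟩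
  simp [List.Chain', List.isChain_cons_cons, h]

private lemma dConnecting_pair {V : Type*} (E : V → V → Prop) (S : Set V) (a b : V) :
    dConnecting E S [a, b] := by
  intro i x y z hx hy hz
  rw [List.getElem?_eq_none (by simp)] at hz
  cases hz

private lemma isPath_triple {V : Type*} {E : V → V → Prop} {a b c : V}
    (hab : a ≠ b) (hbc : b ≠ c) (hac : a ≠ c)
    (h1 : adjD E a b) (h2 : adjD E b c) : IsPath E [a, b, c] a c := by
  refine ⟨rfl, rfl, ?_, by simp [hab, hbc, hac]⟩
  simp [List.Chain', List.isChain_cons_cons, h1, h2]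

private lemma dConnecting_triple {V : Type*} {E : V → V → Prop} {S : Set V} {a b c : V}
    (h1 : E a b ∧ E c b → ∃ s ∈ S, Relation.ReflTransGen E b s)
    (h2 : ¬ (E a b ∧ E c b) → b ∉ S) :
    dConnecting E S [a, b, c] := by
  intro i x y z hx hy hz
  match i with
  | 0 =>
    simp only [List.getElem?_cons_zero, List.getElem?_cons_succ, Option.some.injEq] at hx hy hz
    subst hx; subst hy; subst hz
    exact ⟨h1, h2⟩
  | (n+1) =>
    rw [List.getElem?_eq_none (by simp)] at hz
    cases hz

private lemma adjD_symm {V : Type*} {E : V → V → Prop} {a b : V}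
    (h : adjD E a b) : adjD E b a := Or.symm h

private lemma adj_imp {V : Type*} {E₁ E₂ : V → V → Prop}
    (h₁ : Acyclic E₁) (h₂ : Acyclic E₂)
    (hequiv : ∀ (S : Set V) (X Y : V), dSeparated E₁ S X Y ↔ dSeparated E₂ S X Y)
    {a b : V} (had : adjD E₁ a b) : adjD E₂ a b := by
  have hne : a ≠ b := by
    rintro rfl; rcases had with h | h <;> exact h₁ a (.single h)
  by_contra hnad
  rcases Classical.em (Relation.TransGen E₂ a b) with htg | htg
  · have htg' : ¬ Relation.TransGen E₂ b a := fun h' => h₂ a (htg.trans h')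
    have hsep := sep_lemma h₂ hne.symm (fun h' => hnad (adjD_symm h')) htg'
    exact (hequiv _ b a).2 hsep [b, a] (isPath_pair hne.symm (adjD_symm had))
      (dConnecting_pair _ _ _ _)
  · have hsep := sep_lemma h₂ hne hnad htg
    exact (hequiv _ a b).2 hsep [a, b] (isPath_pair hne had)
      (dConnecting_pair _ _ _ _)

private lemma vs_imp {V : Type*} {E₁ E₂ : V → V → Prop}
    (h₁ : Acyclic E₁) (h₂ : Acyclic E₂)
    (hequiv : ∀ (S : Set V) (X Y : V), dSeparated E₁ S X Y ↔ dSeparated E₂ S X Y)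
    (hskel : ∀ a b, adjD E₁ a b ↔ adjD E₂ a b)
    {a b c : V} (hv : vStructD E₁ a b c) : vStructD E₂ a b c := by
  obtain ⟨hab, hcb, hac, hnadj⟩ := hv
  have hab' : adjD E₂ a b := (hskel a b).1 (Or.inl hab)
  have hcb' : adjD E₂ c b := (hskel c b).1 (Or.inl hcb)
  have hnadj' : ¬ adjD E₂ a c := fun h => hnadj ((hskel a c).2 h)
  have hnab : a ≠ b := by rintro rfl; exact h₁ a (.single hab)
  have hncb : c ≠ b := by rintro rfl; exact h₁ c (.single hcb)
  have hcol : E₂ a b ∧ E₂ c b := by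
    by_contra hncol
    rcases Classical.em (Relation.TransGen E₁ a c) with htg | htg
    · have htg' : ¬ Relation.TransGen E₁ c a := fun h' => h₁ a (htg.trans h')
      have hsep1 := sep_lemma h₁ hac.symm (fun h' => hnadj (adjD_symm h')) htg'
      have hbS : b ∉ {z | E₁ z c} := by
        intro hbS
        exact hsep1 [c, b, a]
          (isPath_triple hncb hnab.symm hac.symm (Or.inl hcb) (Or.inr hab))
          (dConnecting_triple (fun _ => ⟨b, hbS, .refl⟩) (fun hn => absurd ⟨hcb, hab⟩ hn))
      exact (hequiv _ c a).1 hsep1 [c, b, a]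
        (isPath_triple hncb hnab.symm hac.symm hcb' (adjD_symm hab'))
        (dConnecting_triple (fun h' => absurd ⟨h'.2, h'.1⟩ hncol) (fun _ => hbS))
    · have hsep1 := sep_lemma h₁ hac hnadj htg
      have hbS : b ∉ {z | E₁ z a} := by
        intro hbS
        exact hsep1 [a, b, c]
          (isPath_triple hnab hncb.symm hac (Or.inl hab) (Or.inr hcb))
          (dConnecting_triple (fun _ => ⟨b, hbS, .refl⟩) (fun hn => absurd ⟨hab, hcb⟩ hn))
      exact (hequiv _ a c).1 hsep1 [a, b, c]
        (isPath_triple hnab hncb.symm hac hab' (adjD_symm hcb'))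
        (dConnecting_triple (fun h' => absurd h' hncol) (fun _ => hbS))
  exact ⟨hcol.1, hcol.2, hac, hnadj'⟩

/-- two Markov equivalent DAGs (same d-separations) have the same skeleton
and the same v-structures. -/
theorem stmt6 {V : Type*} [Fintype V] (E₁ E₂ : V → V → Prop)
    (h₁ : Acyclic E₁) (h₂ : Acyclic E₂)
    (hequiv : ∀ (S : Set V) (X Y : V), dSeparated E₁ S X Y ↔ dSeparated E₂ S X Y) :
    (∀ a b, adjD E₁ a b ↔ adjD E₂ a b) ∧
    (∀ a b c, vStructD E₁ a b c ↔ vStructD E₂ a b c) := by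
  have hskel : ∀ a b, adjD E₁ a b ↔ adjD E₂ a b := fun a b =>
    ⟨adj_imp h₁ h₂ hequiv, adj_imp h₂ h₁ (fun S X Y => (hequiv S X Y).symm)⟩
  exact ⟨hskel, fun a b c =>
    ⟨vs_imp h₁ h₂ hequiv hskel,
     vs_imp h₂ h₁ (fun S X Y => (hequiv S X Y).symm) (fun a b => (hskel a b).symm)⟩⟩
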